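/- Let S be a memory system all of whose traces are causal, and fix n,m,v ≥ 1. Then every unambiguous trace of S(n,m,v) is sequentially consistent if and only if there exists a witness Ω such that the constraint graph G(Ω)(τ) is acyclic for every unambiguous trace τ of S(n,m,v). -/

import Mathlib

/-- A memory operation: read or write. -/
inductive MemOp : Type
  | R : MemOp
  | W : MemOp
deriving DecidableEq

/-- A memory event ⟨op, proc, loc, data⟩. -/
structure MemEvent : Type where
  op : MemOp
  proc : ℕ
  loc : ℕ
  data : ℕ
deriving DecidableEq

instance : Inhabited MemEvent := ⟨⟨MemOp.R, 1, 1, 0⟩⟩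

/-- A trace is a finite sequence of memory events (1-indexed via `ev`). -/
abbrev MTrace := List MemEvent

/-- The x-th event of a trace (1-indexed). -/
def ev (τ : MTrace) (x : ℕ) : MemEvent := τ.getD (x - 1) default

/-- dom(τ) = {1, …, |τ|}. -/
def Dom (τ : MTrace) : Set ℕ := {x | 1 ≤ x ∧ x ≤ τ.length}

/-- P(τ,i): indices of events of processor i. -/
def Pset (τ : MTrace) (i : ℕ) : Set ℕ := {x | x ∈ Dom τ ∧ (ev τ x).proc = i}

/-- L(τ,j): indices of events to location j. -/
def Lset (τ : MTrace) (j : ℕ) : Set ℕ := {x | x ∈ Dom τ ∧ (ev τ x).loc = j}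

/-- L^w(τ,j): indices of write events to location j. -/
def Lw (τ : MTrace) (j : ℕ) : Set ℕ := {x | x ∈ Lset τ j ∧ (ev τ x).op = MemOp.W}

/-- L^r(τ,j): indices of read events to location j. -/
def Lr (τ : MTrace) (j : ℕ) : Set ℕ := {x | x ∈ Lset τ j ∧ (ev τ x).op = MemOp.R}

/-- A trace is unambiguous if every write event has a nonzero data value distinct
from that of every other write event to the same location. -/
def Unambiguous (τ : MTrace) : Prop :=
  ∀ j, ∀ x ∈ Lw τ j, (ev τ x).data ≠ 0 ∧
    ∀ y ∈ Lw τ j, y ≠ x → (ev τ y).data ≠ (ev τ x).data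

/-- A trace is causal if the data value of every read event is 0 or equals the data
value of some write event to the same location. -/
def Causal (τ : MTrace) : Prop :=
  ∀ j, ∀ x ∈ Lr τ j, (ev τ x).data = 0 ∨ ∃ y ∈ Lw τ j, (ev τ y).data = (ev τ x).data

/-- ⟨x,y⟩ ∈ M(τ,i): the total order on P(τ,i) given by index order. -/
def Mrel (τ : MTrace) (i : ℕ) (x y : ℕ) : Prop :=
  x ∈ Pset τ i ∧ y ∈ Pset τ i ∧ x < y

/-- A sequence of memory events (given by its length and 1-indexed access function)
is serial: each event's data value equals that of the latest write to the same
location at an index no larger than its own, and equals 0 if no such write exists. -/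
def SerialFn (len : ℕ) (e : ℕ → MemEvent) : Prop :=
  ∀ u, 1 ≤ u → u ≤ len →
    ((∀ k, 1 ≤ k → k ≤ u → ¬((e k).op = MemOp.W ∧ (e k).loc = (e u).loc)) →
       (e u).data = 0) ∧
    (∀ k, 1 ≤ k → k ≤ u → (e k).op = MemOp.W → (e k).loc = (e u).loc →
       (∀ k', k < k' → k' ≤ u → ¬((e k').op = MemOp.W ∧ (e k').loc = (e u).loc)) →
       (e u).data = (e k).data)

/-- f (with inverse g) is a permutation of {1,…,|τ|} satisfying conditions C1 and C2. -/
def IsSCWitness (τ : MTrace) (f g : ℕ → ℕ) : Prop :=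
  (∀ u ∈ Dom τ, f u ∈ Dom τ) ∧
  (∀ u ∈ Dom τ, g u ∈ Dom τ) ∧
  (∀ u ∈ Dom τ, g (f u) = u) ∧
  (∀ u ∈ Dom τ, f (g u) = u) ∧
  (∀ i u v, Mrel τ i u v → f u < f v) ∧
  SerialFn τ.length (fun x => ev τ (g x))

/-- A trace is sequentially consistent if some permutation satisfies C1 and C2. -/
def SeqConsistent (τ : MTrace) : Prop := ∃ f g, IsSCWitness τ f g

/-- A witness assigns to each trace and location a strict total order on L^w(τ,j). -/
def IsWitness (Ω : MTrace → ℕ → ℕ → ℕ → Prop) : Prop :=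
  ∀ τ j,
    (∀ x y, Ω τ j x y → x ∈ Lw τ j ∧ y ∈ Lw τ j) ∧
    (∀ x, ¬ Ω τ j x x) ∧
    (∀ x y z, Ω τ j x y → Ω τ j y z → Ω τ j x z) ∧
    (∀ x y, x ∈ Lw τ j → y ∈ Lw τ j → x ≠ y → Ω τ j x y ∨ Ω τ j y x)

/-- A witness is simple if it orders the writes to each location by index order. -/
def IsSimple (Ω : MTrace → ℕ → ℕ → ℕ → Prop) : Prop :=
  ∀ τ j x y, Ω τ j x y ↔ (x ∈ Lw τ j ∧ y ∈ Lw τ j ∧ x < y)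

/-- ⟨x,y⟩ ∈ Ω^e(τ,j): the extension of the witness order to all events to location j. -/
def OmegaE (Ω : MTrace → ℕ → ℕ → ℕ → Prop) (τ : MTrace) (j x y : ℕ) : Prop :=
  x ∈ Lset τ j ∧ y ∈ Lset τ j ∧
  (((ev τ x).data = (ev τ y).data ∧ (ev τ x).op = MemOp.W ∧ (ev τ y).op = MemOp.R) ∨
   ((ev τ x).data = 0 ∧ (ev τ y).data ≠ 0) ∨
   (∃ a b, a ∈ Lw τ j ∧ b ∈ Lw τ j ∧ Ω τ j a b ∧
      (ev τ a).data = (ev τ x).data ∧ (ev τ b).data = (ev τ y).data))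

/-- Edge of the constraint graph G(Ω)(τ): union of the M(τ,i) and the Ω^e(τ,j). -/
def GEdge (Ω : MTrace → ℕ → ℕ → ℕ → Prop) (τ : MTrace) (x y : ℕ) : Prop :=
  (∃ i, Mrel τ i x y) ∨ (∃ j, OmegaE Ω τ j x y)

/-- The constraint graph G(Ω)(τ) has a cycle. -/
def HasCycle (Ω : MTrace → ℕ → ℕ → ℕ → Prop) (τ : MTrace) : Prop :=
  ∃ x, Relation.TransGen (GEdge Ω τ) x x

/-- The constraint graph G(Ω)(τ) is acyclic. -/
def Acyclic (Ω : MTrace → ℕ → ℕ → ℕ → Prop) (τ : MTrace) : Prop :=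
  ¬ HasCycle Ω τ

/-- All events of the trace have processor in {1,…,n} and location in {1,…,m}. -/
def InRange (n m : ℕ) (τ : MTrace) : Prop :=
  ∀ e ∈ τ, 1 ≤ e.proc ∧ e.proc ≤ n ∧ 1 ≤ e.loc ∧ e.loc ≤ m

/-- All data values in the trace lie in {0,…,v}. -/
def DataBounded (v : ℕ) (τ : MTrace) : Prop := ∀ e ∈ τ, e.data ≤ v

/-- A memory system with n processors and m locations: for each v ≥ 1, a set S(n,m,v)
of traces whose processors, locations, and data values are in range. -/
structure MemSystem (n m : ℕ) : Type where
  S : ℕ → Set MTrace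
  wf : ∀ v, 1 ≤ v → ∀ τ ∈ S v, InRange n m τ ∧ DataBounded v τ

/-- S(n,m): the union of the S(n,m,v) over v ≥ 1. -/
def MemSystem.traces {n m : ℕ} (M : MemSystem n m) : Set MTrace :=
  {τ | ∃ v, 1 ≤ v ∧ τ ∈ M.S v}

/-- A renaming function λ with λ(j,0) = 0 for every location j. -/
def IsRenaming (lam : ℕ → ℕ → ℕ) : Prop := ∀ j, lam j 0 = 0

/-- λ^d: rename the data value of each event according to its location. -/
def renameD (lam : ℕ → ℕ → ℕ) (τ : MTrace) : MTrace :=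
  τ.map fun e => { e with data := lam e.loc e.data }

/-- The memory system is data independent: a trace is in S(n,m,v) iff it is obtained
from an unambiguous trace of S(n,m) by a renaming function with values in {0,…,v}. -/
def DataIndependent {n m : ℕ} (M : MemSystem n m) : Prop :=
  ∀ v, 1 ≤ v → ∀ τ, τ ∈ M.S v ↔
    ∃ τ' lam, τ' ∈ M.traces ∧ Unambiguous τ' ∧ IsRenaming lam ∧
      (∀ j d, lam j d ≤ v) ∧ τ = renameD lam τ'

/-- λ^p: rename the processor of each event. -/
def renameP (lam : ℕ → ℕ) (τ : MTrace) : MTrace :=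
  τ.map fun e => { e with proc := lam e.proc }

/-- λ^l: rename the location of each event. -/
def renameL (lam : ℕ → ℕ) (τ : MTrace) : MTrace :=
  τ.map fun e => { e with loc := lam e.loc }

/-- λ is a permutation of {1,…,n}. -/
def PermOn (n : ℕ) (lam : ℕ → ℕ) : Prop :=
  Set.BijOn lam (Set.Icc 1 n) (Set.Icc 1 n)

/-- The memory system is processor symmetric. -/
def ProcSymmetric {n m : ℕ} (M : MemSystem n m) : Prop :=
  ∀ lam, PermOn n lam → ∀ v τ, τ ∈ M.S v → renameP lam τ ∈ M.S v

/-- The memory system is location symmetric. -/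
def LocSymmetric {n m : ℕ} (M : MemSystem n m) : Prop :=
  ∀ lam, PermOn m lam → ∀ v τ, τ ∈ M.S v → renameL lam τ ∈ M.S v

/-- x ⊕ 1 in the cyclic group {1,…,k} with identity k. -/
def cyc (k x : ℕ) : ℕ := if x = k then 1 else x + 1

/-- A k-nice cycle u_1,v_1,…,u_k,v_k in G(Ω)(τ): distinct vertices; each ⟨u_x,v_x⟩
is a processor edge, each ⟨v_x,u_{x⊕1}⟩ a location edge; no processor (resp.
location) contributes two edges. -/
def NiceCycle (Ω : MTrace → ℕ → ℕ → ℕ → Prop) (τ : MTrace) (k : ℕ)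
    (u v : ℕ → ℕ) : Prop :=
  1 ≤ k ∧
  (∀ x ∈ Set.Icc 1 k, ∀ y ∈ Set.Icc 1 k, x ≠ y → u x ≠ u y) ∧
  (∀ x ∈ Set.Icc 1 k, ∀ y ∈ Set.Icc 1 k, x ≠ y → v x ≠ v y) ∧
  (∀ x ∈ Set.Icc 1 k, ∀ y ∈ Set.Icc 1 k, u x ≠ v y) ∧
  (∀ x ∈ Set.Icc 1 k, ∃ i, Mrel τ i (u x) (v x)) ∧
  (∀ x ∈ Set.Icc 1 k, ∃ j, OmegaE Ω τ j (v x) (u (cyc k x))) ∧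
  (∀ x ∈ Set.Icc 1 k, ∀ y ∈ Set.Icc 1 k, x ≠ y → ∀ i,
     Mrel τ i (u x) (v x) → ¬ Mrel τ i (u y) (v y)) ∧
  (∀ x ∈ Set.Icc 1 k, ∀ y ∈ Set.Icc 1 k, x ≠ y → ∀ j,
     OmegaE Ω τ j (v x) (u (cyc k x)) → ¬ OmegaE Ω τ j (v y) (u (cyc k y)))

/-- A canonical k-nice cycle: a k-nice cycle whose processor edges are in M(τ,x) and
whose location edges are in Ω^e(τ,x⊕1), for x = 1,…,k. -/
def CanonicalNiceCycle (Ω : MTrace → ℕ → ℕ → ℕ → Prop) (τ : MTrace) (k : ℕ)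
    (u v : ℕ → ℕ) : Prop :=
  NiceCycle Ω τ k u v ∧
  (∀ x ∈ Set.Icc 1 k, Mrel τ x (u x) (v x)) ∧
  (∀ x ∈ Set.Icc 1 k, OmegaE Ω τ (cyc k x) (v x) (u (cyc k x)))

/-- The trace satisfies the automaton Constrain_k(j). -/
def ConstrainK (k j : ℕ) (τ : MTrace) : Prop :=
  (j ≤ k →
    (∀ x ∈ Lw τ j, (ev τ x).data ≤ 2) ∧
    (∀ x ∈ Lw τ j, ∀ y ∈ Lw τ j, (ev τ x).data = 1 → (ev τ y).data = 1 → x = y) ∧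
    (∀ x ∈ Lw τ j, ∀ y ∈ Lw τ j, (ev τ x).data = 0 → (ev τ y).data ≠ 0 → x < y) ∧
    (∀ y ∈ Lw τ j, (ev τ y).data = 2 → ∃ x ∈ Lw τ j, (ev τ x).data = 1 ∧ x < y)) ∧
  (k < j → ∀ x ∈ Lw τ j, (ev τ x).data = 0)

/-- The trace satisfies the automaton Check_k(i). -/
def CheckK (k i : ℕ) (τ : MTrace) : Prop :=
  ∃ x ∈ Dom τ, ∃ y ∈ Dom τ, x < y ∧
    (ev τ x).proc = i ∧ (ev τ x).loc = i ∧
    ((ev τ x).data = 1 ∨ (ev τ x).data = 2) ∧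
    (ev τ y).proc = i ∧ (ev τ y).loc = cyc k i ∧
    ((ev τ y).data = 0 ∨ ((ev τ y).op = MemOp.W ∧ (ev τ y).data = 1))

/-! ### Auxiliary material for the proof -/

/-- The permuted event sequence. -/
def evg (τ : MTrace) (g : ℕ → ℕ) : ℕ → MemEvent := fun k => ev τ (g k)

lemma edge_dom {Ω : MTrace → ℕ → ℕ → ℕ → Prop} {τ : MTrace} {x y : ℕ}
    (h : GEdge Ω τ x y) : x ∈ Dom τ ∧ y ∈ Dom τ := by
  rcases h with ⟨i, h1, h2, _⟩ | ⟨j, h1, h2, _⟩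
  · exact ⟨h1.1, h2.1⟩
  · exact ⟨h1.1, h2.1⟩

lemma hU_ne_zero {τ : MTrace} {j x : ℕ} (hU : Unambiguous τ) (hx : x ∈ Lw τ j) :
    (ev τ x).data ≠ 0 := (hU j x hx).1

lemma hU_eq {τ : MTrace} {j x y : ℕ} (hU : Unambiguous τ) (hx : x ∈ Lw τ j)
    (hy : y ∈ Lw τ j) (hd : (ev τ y).data = (ev τ x).data) : y = x := by
  by_contra hne; exact (hU j x hx).2 y hy hne hd

lemma f_inj {τ : MTrace} {f g : ℕ → ℕ} (hw : IsSCWitness τ f g) {u v : ℕ}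
    (hu : u ∈ Dom τ) (hv : v ∈ Dom τ) (h : f u = f v) : u = v := by
  rw [← hw.2.2.1 u hu, ← hw.2.2.1 v hv, h]

/-- Extraction of the latest write from the seriality property. -/
lemma serial_latest {len : ℕ} {e : ℕ → MemEvent} (hs : SerialFn len e)
    {u : ℕ} (hu1 : 1 ≤ u) (hu2 : u ≤ len) :
    ((∀ k, 1 ≤ k → k ≤ u → ¬((e k).op = MemOp.W ∧ (e k).loc = (e u).loc)) ∧
        (e u).data = 0) ∨
    (∃ k, 1 ≤ k ∧ k ≤ u ∧ (e k).op = MemOp.W ∧ (e k).loc = (e u).loc ∧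
      (∀ k', k < k' → k' ≤ u → ¬((e k').op = MemOp.W ∧ (e k').loc = (e u).loc)) ∧
      (e u).data = (e k).data) := by
  classical
  by_cases hex : ∃ k, 1 ≤ k ∧ k ≤ u ∧ (e k).op = MemOp.W ∧ (e k).loc = (e u).loc
  · right
    obtain ⟨k0, hk01, hk0u, hk0w, hk0l⟩ := hex
    set P : ℕ → Prop := fun k => 1 ≤ k ∧ (e k).op = MemOp.W ∧ (e k).loc = (e u).loc with hP
    have hspec : P (Nat.findGreatest P u) := Nat.findGreatest_spec hk0u ⟨hk01, hk0w, hk0l⟩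
    set k := Nat.findGreatest P u with hk
    have hkle : k ≤ u := Nat.findGreatest_le u
    have hgr : ∀ k', k < k' → k' ≤ u → ¬((e k').op = MemOp.W ∧ (e k').loc = (e u).loc) := by
      intro k' h1 h2 hcon
      exact Nat.findGreatest_is_greatest h1 h2 ⟨le_trans hspec.1 (le_of_lt h1), hcon.1, hcon.2⟩
    exact ⟨k, hspec.1, hkle, hspec.2.1, hspec.2.2, hgr,
      (hs u hu1 hu2).2 k hspec.1 hkle hspec.2.1 hspec.2.2 hgr⟩
  · left
    push_neg at hex
    have hnone : ∀ k, 1 ≤ k → k ≤ u → ¬((e k).op = MemOp.W ∧ (e k).loc = (e u).loc) :=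
      fun k h1 h2 hcon => hex k h1 h2 hcon.1 hcon.2
    exact ⟨hnone, (hs u hu1 hu2).1 hnone⟩

/-- In a serial permutation of an unambiguous trace, an event with nonzero data is
preceded (in the permuted order) by the unique write providing its value, and no
write to the same location lies strictly between them. -/
lemma latest_write_of_ne_zero {τ : MTrace} {f g : ℕ → ℕ} (hU : Unambiguous τ)
    (hw : IsSCWitness τ f g) {j x : ℕ} (hx : x ∈ Lset τ j)
    (hd : (ev τ x).data ≠ 0) :
    ∃ w ∈ Lw τ j, (ev τ w).data = (ev τ x).data ∧ f w ≤ f x ∧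
      ∀ z ∈ Lw τ j, f z ≤ f x → f z ≤ f w := by
  obtain ⟨hf, hg, hgf, hfg, _, hser⟩ := hw
  have hxD : x ∈ Dom τ := hx.1
  have huD : f x ∈ Dom τ := hf x hxD
  have hE : evg τ g (f x) = ev τ x := by unfold evg; rw [hgf x hxD]
  have hser' : SerialFn τ.length (evg τ g) := hser
  rcases serial_latest hser' huD.1 huD.2 with ⟨_, h0⟩ | ⟨k, hk1, hk2, hkw, hkl, hmax, hdat⟩
  · rw [hE] at h0; exact absurd h0 hd
  · have hkD : k ∈ Dom τ := ⟨hk1, le_trans hk2 huD.2⟩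
    have hwD : g k ∈ Dom τ := hg k hkD
    have hfw : f (g k) = k := hfg k hkD
    rw [hE] at hkl hdat
    have hwloc : (ev τ (g k)).loc = j := by
      have : (evg τ g k).loc = (ev τ x).loc := hkl
      rw [hx.2] at this; exact this
    have hwLw : g k ∈ Lw τ j := ⟨⟨hwD, hwloc⟩, hkw⟩
    refine ⟨g k, hwLw, hdat.symm, by rw [hfw]; exact hk2, ?_⟩
    intro z hz hzle
    rw [hfw]
    by_contra hlt
    push_neg at hlt
    refine hmax (f z) hlt hzle ⟨?_, ?_⟩
    · show (ev τ (g (f z))).op = MemOp.W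
      rw [hgf z hz.1.1]; exact hz.2
    · show (ev τ (g (f z))).loc = (evg τ g (f x)).loc
      rw [hgf z hz.1.1, hE, hx.2]; exact hz.1.2

/-- In a serial permutation of an unambiguous trace, an event with data 0 precedes
every write to its location. -/
lemma no_write_before_of_zero {τ : MTrace} {f g : ℕ → ℕ} (hU : Unambiguous τ)
    (hw : IsSCWitness τ f g) {j x : ℕ} (hx : x ∈ Lset τ j)
    (hd : (ev τ x).data = 0) :
    ∀ z ∈ Lw τ j, f x < f z := by
  obtain ⟨hf, hg, hgf, hfg, _, hser⟩ := hw
  have hxD : x ∈ Dom τ := hx.1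
  have huD : f x ∈ Dom τ := hf x hxD
  have hE : evg τ g (f x) = ev τ x := by unfold evg; rw [hgf x hxD]
  have hser' : SerialFn τ.length (evg τ g) := hser
  rcases serial_latest hser' huD.1 huD.2 with ⟨hnone, _⟩ | ⟨k, hk1, hk2, hkw, hkl, _, hdat⟩
  · intro z hz
    have hzD : z ∈ Dom τ := hz.1.1
    have hfzD : f z ∈ Dom τ := hf z hzD
    by_contra hle
    push_neg at hle
    refine hnone (f z) hfzD.1 hle ⟨?_, ?_⟩
    · show (ev τ (g (f z))).op = MemOp.W
      rw [hgf z hzD]; exact hz.2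
    · show (ev τ (g (f z))).loc = (evg τ g (f x)).loc
      rw [hgf z hzD, hE, hx.2]; exact hz.1.2
  · exfalso
    have hkD : k ∈ Dom τ := ⟨hk1, le_trans hk2 huD.2⟩
    have hwD : g k ∈ Dom τ := hg k hkD
    rw [hE] at hkl hdat
    have hwloc : (ev τ (g k)).loc = j := by
      have : (evg τ g k).loc = (ev τ x).loc := hkl
      rw [hx.2] at this; exact this
    have hwLw : g k ∈ Lw τ j := ⟨⟨hwD, hwloc⟩, hkw⟩
    exact hU_ne_zero hU hwLw (by show (evg τ g k).data = 0; rw [← hdat]; exact hd)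

/-- The canonical witness obtained from chosen sequentially-consistent schedules. -/
def scOmega (τ : MTrace) (j x y : ℕ) : Prop :=
  x ∈ Lw τ j ∧ y ∈ Lw τ j ∧
    ((∃ h : SeqConsistent τ, h.choose x < h.choose y) ∨ (¬ SeqConsistent τ ∧ x < y))

lemma scOmega_isWitness : IsWitness scOmega := by
  intro τ j
  refine ⟨fun x y h => ⟨h.1, h.2.1⟩, ?_, ?_, ?_⟩
  · rintro x ⟨_, _, ⟨h, hlt⟩ | ⟨_, hlt⟩⟩ <;> exact lt_irrefl _ hlt
  · rintro x y z ⟨hx, hy, hxy⟩ ⟨_, hz, hyz⟩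
    refine ⟨hx, hz, ?_⟩
    rcases hxy with ⟨h, h1⟩ | ⟨hns, h1⟩
    · rcases hyz with ⟨h', h2⟩ | ⟨hns, _⟩
      · exact Or.inl ⟨h, lt_trans h1 h2⟩
      · exact absurd h hns
    · rcases hyz with ⟨h', _⟩ | ⟨_, h2⟩
      · exact absurd h' hns
      · exact Or.inr ⟨hns, lt_trans h1 h2⟩
  · intro x y hx hy hne
    by_cases h : SeqConsistent τ
    · obtain ⟨g, hw⟩ := h.choose_spec
      have : h.choose x ≠ h.choose y := fun he => hne (f_inj ⟨h.choose_spec.choose_spec.1,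
        hw.2.1, hw.2.2.1, hw.2.2.2.1, hw.2.2.2.2⟩ hx.1.1 hy.1.1 he)
      rcases lt_or_gt_of_ne this with hlt | hlt
      · exact Or.inl ⟨hx, hy, Or.inl ⟨h, hlt⟩⟩
      · exact Or.inr ⟨hy, hx, Or.inl ⟨h, hlt⟩⟩
    · rcases lt_or_gt_of_ne hne with hlt | hlt
      · exact Or.inl ⟨hx, hy, Or.inr ⟨h, hlt⟩⟩
      · exact Or.inr ⟨hy, hx, Or.inr ⟨h, hlt⟩⟩

/-- Every edge of the constraint graph for `scOmega` is increasing under the chosen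
sequentially-consistent schedule. -/
lemma sc_edge_lt {τ : MTrace} (hU : Unambiguous τ) (h : SeqConsistent τ)
    {x y : ℕ} (he : GEdge scOmega τ x y) :
    h.choose x < h.choose y := by
  obtain ⟨g, hw⟩ := h.choose_spec
  set f := h.choose with hfdef
  rcases he with ⟨i, hm⟩ | ⟨j, hx, hy, hcase⟩
  · exact hw.2.2.2.2.1 i x y hm
  · rcases hcase with ⟨hdxy, hxw, hyr⟩ | ⟨hdx0, hdy0⟩ | ⟨a, b, haLw, hbLw, hab, hda, hdb⟩
    · -- (i) x writes the value read by y
      have hxLw : x ∈ Lw τ j := ⟨hx, hxw⟩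
      have hdy : (ev τ y).data ≠ 0 := by rw [← hdxy]; exact hU_ne_zero hU hxLw
      obtain ⟨w, hwLw, hdw, hwle, _⟩ := latest_write_of_ne_zero hU hw hy hdy
      have hwx : w = x := hU_eq hU hxLw hwLw (by rw [hdw, hdxy])
      have hxy : x ≠ y := by
        intro hxyeq; rw [hxyeq, hyr] at hxw; exact MemOp.noConfusion hxw
      have : f x ≠ f y := fun he => hxy (f_inj hw hx.1 hy.1 he)
      exact lt_of_le_of_ne (hwx ▸ hwle) this
    · -- (ii) x has data 0, y has nonzero data
      have hzero := no_write_before_of_zero hU hw hx hdx0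
      cases hopy : (ev τ y).op with
      | W => exact hzero y ⟨hy, hopy⟩
      | R =>
        obtain ⟨w, hwLw, _, hwle, _⟩ := latest_write_of_ne_zero hU hw hy hdy0
        exact lt_of_lt_of_le (hzero w hwLw) hwle
    · -- (iii) the values of x and y are written by Ω-ordered writes a, b
      have hfab : f a < f b := by
        rcases hab.2.2 with ⟨h', hlt⟩ | ⟨hns, _⟩
        · exact hlt
        · exact absurd h hns
      have hfby : f b ≤ f y := by
        cases hopy : (ev τ y).op with
        | W =>
          have : y = b := hU_eq hU hbLw ⟨hy, hopy⟩ hdb.symm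
          rw [this]
        | R =>
          have hdy : (ev τ y).data ≠ 0 := by rw [← hdb]; exact hU_ne_zero hU hbLw
          obtain ⟨w, hwLw, hdw, hwle, _⟩ := latest_write_of_ne_zero hU hw hy hdy
          have : w = b := hU_eq hU hbLw hwLw (by rw [hdw, hdb])
          rw [← this]; exact hwle
      have hfxb : f x < f b := by
        cases hopx : (ev τ x).op with
        | W =>
          have : x = a := hU_eq hU haLw ⟨hx, hopx⟩ hda.symm
          rw [this]; exact hfab
        | R =>
          have hdx : (ev τ x).data ≠ 0 := by rw [← hda]; exact hU_ne_zero hU haLw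
          obtain ⟨w, hwLw, hdw, hwle, hmax⟩ := latest_write_of_ne_zero hU hw hx hdx
          have hwa : w = a := hU_eq hU haLw hwLw (by rw [hdw, hda])
          by_contra hle
          push_neg at hle
          have := hmax b hbLw hle
          rw [hwa] at this
          exact absurd hfab (not_lt.mpr this)
      exact lt_of_lt_of_le hfxb hfby

/-- A topological sort of an acyclic constraint graph. -/
lemma exists_topo {Ω : MTrace → ℕ → ℕ → ℕ → Prop} {τ : MTrace} (hac : Acyclic Ω τ) :
    ∃ f g : ℕ → ℕ, (∀ u ∈ Dom τ, f u ∈ Dom τ) ∧ (∀ u ∈ Dom τ, g u ∈ Dom τ) ∧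
      (∀ u ∈ Dom τ, g (f u) = u) ∧ (∀ u ∈ Dom τ, f (g u) = u) ∧
      (∀ x y, GEdge Ω τ x y → f x < f y) := by
  classical
  set len := τ.length with hlen
  set s : Finset ℕ := Finset.Icc 1 len with hs
  have hdom : ∀ x : ℕ, x ∈ Dom τ ↔ x ∈ s := by
    intro x; simp [Dom, hs, Finset.mem_Icc, hlen]
  have hirr : ∀ x : ℕ, ¬ Relation.TransGen (GEdge Ω τ) x x := fun x h => hac ⟨x, h⟩
  let T := {x : ℕ // x ∈ s}
  let r : T → T → Prop := fun a b => a = b ∨ Relation.TransGen (GEdge Ω τ) a.1 b.1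
  haveI : IsPartialOrder T r :=
    { refl := fun a => Or.inl rfl
      trans := by
        rintro a b c (rfl | h1) hbc
        · exact hbc
        · rcases hbc with rfl | h2
          · exact Or.inr h1
          · exact Or.inr (h1.trans h2)
      antisymm := by
        rintro a b (rfl | h1) h2
        · rfl
        · rcases h2 with rfl | h2
          · rfl
          · exact absurd (h1.trans h2) (hirr a.1) }
  obtain ⟨le, hlin, hle⟩ := extend_partialOrder r
  let slt : T → T → Prop := fun a b => le a b ∧ a ≠ b
  haveI : IsStrictTotalOrder T slt :=
    { irrefl := fun a h => h.2 rfl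
      trans := by
        rintro a b c ⟨h1, hne1⟩ ⟨h2, hne2⟩
        refine ⟨hlin.trans a b c h1 h2, fun hceq => ?_⟩
        exact hne1 (hlin.antisymm a b h1 (hceq ▸ h2))
      trichotomous := by
        intro a b
        by_cases hab : a = b
        · exact fun _ _ => hab
        · rcases hlin.total a b with h | h
          · exact fun h1 _ => (h1 ⟨h, hab⟩).elim
          · exact fun _ h2 => (h2 ⟨h, Ne.symm hab⟩).elim }
  -- facts about slt
  have slt_trans : ∀ a b c : T, slt a b → slt b c → slt a c := by
    rintro a b c ⟨h1, hne1⟩ ⟨h2, hne2⟩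
    exact ⟨hlin.trans a b c h1 h2, fun hceq => hne1 (hlin.antisymm a b h1 (hceq ▸ h2))⟩
  have slt_irrefl : ∀ a : T, ¬ slt a a := fun a h => h.2 rfl
  have slt_tot : ∀ a b : T, a ≠ b → slt a b ∨ slt b a := by
    intro a b hab
    rcases hlin.total a b with h | h
    · exact Or.inl ⟨h, hab⟩
    · exact Or.inr ⟨h, Ne.symm hab⟩
  -- rank function
  let rank : T → ℕ := fun a => (Finset.univ.filter (fun b => slt b a)).card
  have hrank : ∀ a b : T, slt a b → rank a < rank b := by
    intro a b hab
    apply Finset.card_lt_card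
    rw [Finset.ssubset_iff_of_subset]
    · exact ⟨a, Finset.mem_filter.mpr ⟨Finset.mem_univ a, hab⟩,
        fun hmem => slt_irrefl a (Finset.mem_filter.mp hmem).2⟩
    · intro c hc
      rw [Finset.mem_filter] at hc ⊢
      exact ⟨hc.1, slt_trans c a b hc.2 hab⟩
  have hrank_lt : ∀ a : T, rank a < len := by
    intro a
    have h1 : (Finset.univ.filter (fun b => slt b a)).card
        < (Finset.univ : Finset T).card := by
      apply Finset.card_lt_card
      rw [Finset.ssubset_iff_of_subset (Finset.subset_univ _)]
      exact ⟨a, Finset.mem_univ a, fun hmem => slt_irrefl a (Finset.mem_filter.mp hmem).2⟩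
    have h2 : (Finset.univ : Finset T).card = len := by
      rw [Finset.card_univ]
      have : Fintype.card T = s.card := Fintype.card_coe s
      rw [this]
      have : s.card = len + 1 - 1 := Nat.card_Icc 1 len
      omega
    exact lt_of_lt_of_eq h1 h2
  let R : T → Fin len := fun a => ⟨rank a, hrank_lt a⟩
  have hRinj : Function.Injective R := by
    intro a b hab
    by_contra hne
    rcases slt_tot a b hne with h | h
    · have h' : (R a).val < (R b).val := hrank a b h
      rw [hab] at h'
      omega
    · have h' : (R b).val < (R a).val := hrank b a h
      rw [hab] at h'
      omega
  have hRbij : Function.Bijective R := by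
    rw [Fintype.bijective_iff_injective_and_card]
    refine ⟨hRinj, ?_⟩
    have h1 : Fintype.card T = s.card := Fintype.card_coe s
    have h2 : s.card = len + 1 - 1 := Nat.card_Icc 1 len
    rw [h1, h2, Fintype.card_fin]
    omega
  let E : T ≃ Fin len := Equiv.ofBijective R hRbij
  refine ⟨fun u => if h : u ∈ s then (E ⟨u, h⟩).val + 1 else 0,
    fun u => if h : u ∈ s then (E.symm ⟨u - 1, by
      have h' := Finset.mem_Icc.mp h; omega⟩).val else 0, ?_, ?_, ?_, ?_, ?_⟩
  · intro u hu
    rw [hdom] at hu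
    beta_reduce
    rw [dif_pos hu, hdom]
    apply Finset.mem_Icc.mpr
    have := (E ⟨u, hu⟩).isLt
    omega
  · intro u hu
    rw [hdom] at hu
    beta_reduce
    rw [dif_pos hu, hdom]
    exact (E.symm _).2
  · intro u hu
    rw [hdom] at hu
    beta_reduce
    rw [dif_pos hu]
    have hlt := (E ⟨u, hu⟩).isLt
    have hmem : (E ⟨u, hu⟩).val + 1 ∈ s := Finset.mem_Icc.mpr (by omega)
    rw [dif_pos hmem]
    have heq : (⟨(E ⟨u, hu⟩).val + 1 - 1, by omega⟩ : Fin len)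
        = E ⟨u, hu⟩ := by
      apply Fin.ext; simp
    rw [heq, Equiv.symm_apply_apply]
  · intro u hu
    rw [hdom] at hu
    have hu' : 1 ≤ u ∧ u ≤ len := Finset.mem_Icc.mp hu
    beta_reduce
    rw [dif_pos hu]
    have hmem : (E.symm ⟨u - 1, by omega⟩ : T).val ∈ s := (E.symm _).2
    rw [dif_pos hmem]
    have heq : (⟨(E.symm ⟨u - 1, by omega⟩ : T).val, hmem⟩ : T)
        = E.symm ⟨u - 1, by omega⟩ := rfl
    rw [heq, Equiv.apply_symm_apply]
    show u - 1 + 1 = u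
    omega
  · intro x y hxy
    obtain ⟨hxD, hyD⟩ := edge_dom hxy
    rw [hdom] at hxD hyD
    beta_reduce
    rw [dif_pos hxD, dif_pos hyD]
    have hne : (⟨x, hxD⟩ : T) ≠ ⟨y, hyD⟩ := by
      intro heq
      have : x = y := congrArg Subtype.val heq
      subst this
      exact hirr x (Relation.TransGen.single hxy)
    have hslt : slt ⟨x, hxD⟩ ⟨y, hyD⟩ :=
      ⟨hle _ _ (Or.inr (Relation.TransGen.single hxy)), hne⟩
    have hvl : rank ⟨x, hxD⟩ < rank ⟨y, hyD⟩ := hrank _ _ hslt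
    have h1 : (E ⟨x, hxD⟩).val = rank ⟨x, hxD⟩ := rfl
    have h2 : (E ⟨y, hyD⟩).val = rank ⟨y, hyD⟩ := rfl
    omega

/-- Seriality of a topological sort of the constraint graph, for a causal
unambiguous trace. -/
lemma serial_of_topo {τ : MTrace} (hU : Unambiguous τ) (hCa : Causal τ)
    {Ω : MTrace → ℕ → ℕ → ℕ → Prop} (hW : IsWitness Ω) {f g : ℕ → ℕ}
    (hf : ∀ u ∈ Dom τ, f u ∈ Dom τ) (hg : ∀ u ∈ Dom τ, g u ∈ Dom τ)
    (hgf : ∀ u ∈ Dom τ, g (f u) = u) (hfg : ∀ u ∈ Dom τ, f (g u) = u)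
    (hmono : ∀ x y, GEdge Ω τ x y → f x < f y) :
    SerialFn τ.length (fun x => ev τ (g x)) := by
  intro u hu1 hu2
  have huD : u ∈ Dom τ := ⟨hu1, hu2⟩
  have hxD : g u ∈ Dom τ := hg u huD
  have hfx : f (g u) = u := hfg u huD
  set x := g u with hxdef
  set j := (ev τ x).loc with hjdef
  have hxLs : x ∈ Lset τ j := ⟨hxD, rfl⟩
  constructor
  · -- no write before u ⟹ data 0
    intro hnone
    by_contra hd
    have hd' : (ev τ x).data ≠ 0 := hd
    cases hopx : (ev τ x).op with
    | W =>
      exact hnone u hu1 le_rfl ⟨hopx, rfl⟩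
    | R =>
      rcases hCa j x ⟨hxLs, hopx⟩ with h0 | ⟨y, hyLw, hdy⟩
      · exact hd' h0
      · have hedge : GEdge Ω τ y x :=
          Or.inr ⟨j, hyLw.1, hxLs, Or.inl ⟨hdy, hyLw.2, hopx⟩⟩
        have hlt : f y < u := by rw [← hfx]; exact hmono y x hedge
        have hfyD : f y ∈ Dom τ := hf y hyLw.1.1
        refine hnone (f y) hfyD.1 (le_of_lt hlt) ⟨?_, ?_⟩
        · show (ev τ (g (f y))).op = MemOp.W
          rw [hgf y hyLw.1.1]; exact hyLw.2
        · show (ev τ (g (f y))).loc = (ev τ (g u)).loc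
          rw [hgf y hyLw.1.1]; exact hyLw.1.2
  · -- data agrees with latest write
    intro k hk1 hku hkop hkloc hlatest
    have hkD : k ∈ Dom τ := ⟨hk1, le_trans hku hu2⟩
    have hwD : g k ∈ Dom τ := hg k hkD
    have hfw : f (g k) = k := hfg k hkD
    set w := g k with hwdef
    have hwLw : w ∈ Lw τ j := ⟨⟨hwD, hkloc⟩, hkop⟩
    rcases eq_or_lt_of_le hku with heq | hlt
    · subst heq; rfl
    · by_contra hne
      have hne' : (ev τ x).data ≠ (ev τ w).data := hne
      by_cases hdx0 : (ev τ x).data = 0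
      · have hedge : GEdge Ω τ x w :=
          Or.inr ⟨j, hxLs, hwLw.1, Or.inr (Or.inl ⟨hdx0, hU_ne_zero hU hwLw⟩)⟩
        have : u < k := by rw [← hfx, ← hfw]; exact hmono x w hedge
        omega
      · cases hopx : (ev τ x).op with
        | W =>
          exact hlatest u hlt le_rfl ⟨hopx, rfl⟩
        | R =>
          rcases hCa j x ⟨hxLs, hopx⟩ with h0 | ⟨y, hyLw, hdy⟩
          · exact hdx0 h0
          · have hyw : y ≠ w := by
              intro heq
              rw [heq] at hdy
              exact hne' hdy.symm
            rcases (hW τ j).2.2.2 y w hyLw hwLw hyw with hΩ | hΩ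
            · have hedge : GEdge Ω τ x w :=
                Or.inr ⟨j, hxLs, hwLw.1, Or.inr (Or.inr ⟨y, w, hyLw, hwLw, hΩ, hdy, rfl⟩)⟩
              have : u < k := by rw [← hfx, ← hfw]; exact hmono x w hedge
              omega
            · have hedge1 : GEdge Ω τ w y :=
                Or.inr ⟨j, hwLw.1, hyLw.1, Or.inr (Or.inr ⟨w, y, hwLw, hyLw, hΩ, rfl, rfl⟩)⟩
              have hedge2 : GEdge Ω τ y x :=
                Or.inr ⟨j, hyLw.1, hxLs, Or.inl ⟨hdy, hyLw.2, hopx⟩⟩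
              have h1 : k < f y := by rw [← hfw]; exact hmono w y hedge1
              have h2 : f y < u := by rw [← hfx]; exact hmono y x hedge2
              refine hlatest (f y) h1 (le_of_lt h2) ⟨?_, ?_⟩
              · show (ev τ (g (f y))).op = MemOp.W
                rw [hgf y hyLw.1.1]; exact hyLw.2
              · show (ev τ (g (f y))).loc = (ev τ (g u)).loc
                rw [hgf y hyLw.1.1]; exact hyLw.1.2

/-- For a memory system all of whose traces are causal, every unambiguous
trace of S(n,m,v) is sequentially consistent iff there is a witness Ω such that
G(Ω)(τ) is acyclic for every unambiguous trace τ of S(n,m,v). -/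
theorem unambiguous_sc_iff_witness_acyclic
    (n m v : ℕ) (hn : 1 ≤ n) (hm : 1 ≤ m) (hv : 1 ≤ v)
    (M : MemSystem n m) (hC : ∀ τ ∈ M.traces, Causal τ) :
    (∀ τ ∈ M.S v, Unambiguous τ → SeqConsistent τ) ↔
      (∃ Ω, IsWitness Ω ∧ ∀ τ ∈ M.S v, Unambiguous τ → Acyclic Ω τ) := by
  constructor
  · -- SC ⟹ acyclic witness
    intro hSC
    refine ⟨scOmega, scOmega_isWitness, ?_⟩
    intro τ hτ hU ⟨x, htg⟩
    have h : SeqConsistent τ := hSC τ hτ hU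
    have key : ∀ y, Relation.TransGen (GEdge scOmega τ) x y → h.choose x < h.choose y := by
      intro y hy
      induction hy with
      | single h' => exact sc_edge_lt hU h h'
      | tail _ h' ih => exact lt_trans ih (sc_edge_lt hU h h')
    exact lt_irrefl _ (key x htg)
  · -- acyclic witness ⟹ SC
    rintro ⟨Ω, hW, hac⟩ τ hτ hU
    have hCaτ : Causal τ := hC τ ⟨v, hv, hτ⟩
    obtain ⟨f, g, hf, hg, hgf, hfg, hmono⟩ := exists_topo (hac τ hτ hU)
    refine ⟨f, g, hf, hg, hgf, hfg, ?_, ?_⟩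
    · intro i u w hm
      exact hmono u w (Or.inl ⟨i, hm⟩)
    · exact serial_of_topo hU hCaτ hW hf hg hgf hfg hmono
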